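/- arXiv:2203.16889 — 8 statements merged into one kernel-verified Lean document; each statement's English description precedes it below -/
import Mathlib

section
/- Let U ⊆ ℂ be open, α ∈ ℂ, and let u, v, w : ℂ → ℂ be differentiable on U with v(t) ≠ 0 for all t ∈ U. For x ∈ ℂ and t ∈ U define the 2×2 complex matrices A(x,t) := [[x² + w(t) + t/2, (x − u(t))·v(t)], [−(2/v(t))·(x·w(t) + u(t)·w(t) − α + 1/2), −(x² + w(t) + t/2)]] and B(x,t) := [[x/2, v(t)/2], [−w(t)/v(t), −x/2]]. Then the zero-curvature (compatibility) equation ∂A/∂t(x,t) − ∂B/∂x(x,t) + A(x,t)·B(x,t) − B(x,t)·A(x,t) = 0 holds for all x ∈ ℂ and all t ∈ U if and only if u, v, w satisfy on U the system: u'(t) = u(t)² + w(t) + t/2, v'(t) = −u(t)·v(t), w'(t) = −2·u(t)·w(t) + α − 1/2. -/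
/-- the zero-curvature equation ∂A/∂t − ∂B/∂x + [A,B] = 0 for the
Jimbo–Miwa Lax pair holds (entrywise) for all x ∈ ℂ, t ∈ U iff (u,v,w) satisfy the
compatibility system. -/
theorem jimbo_miwa_compatibility
    (U : Set ℂ) (hU : IsOpen U) (α : ℂ) (u v w : ℂ → ℂ)
    (hu : ∀ t ∈ U, DifferentiableAt ℂ u t)
    (hv : ∀ t ∈ U, DifferentiableAt ℂ v t)
    (hw : ∀ t ∈ U, DifferentiableAt ℂ w t)
    (hv0 : ∀ t ∈ U, v t ≠ 0)
    (A B : ℂ → ℂ → Matrix (Fin 2) (Fin 2) ℂ)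
    (hA : ∀ x t, A x t = !![x ^ 2 + w t + t / 2, (x - u t) * v t;
        -(2 / v t) * (x * w t + u t * w t - α + 1 / 2), -(x ^ 2 + w t + t / 2)])
    (hB : ∀ x t, B x t = !![x / 2, v t / 2; -(w t / v t), -(x / 2)]) :
    (∀ x : ℂ, ∀ t ∈ U, ∀ i j : Fin 2,
      deriv (fun τ => A x τ i j) t - deriv (fun ξ => B ξ t i j) x
        + (A x t * B x t - B x t * A x t) i j = 0) ↔
    (∀ t ∈ U,
      deriv u t = (u t) ^ 2 + w t + t / 2 ∧
      deriv v t = -(u t) * v t ∧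
      deriv w t = -2 * u t * w t + α - 1 / 2) := by
  have D : ∀ x : ℂ, ∀ t ∈ U,
      deriv (fun τ => A x τ 0 0) t = deriv w t + 1/2 ∧
      deriv (fun τ => A x τ 0 1) t = (0 - deriv u t) * v t + (x - u t) * deriv v t ∧
      deriv (fun τ => A x τ 1 0) t =
        -(-(2 * deriv v t) / v t ^ 2) * (x * w t + u t * w t - α + 1/2)
          + -(2 / v t) * (x * deriv w t + (deriv u t * w t + u t * deriv w t)) ∧
      deriv (fun τ => A x τ 1 1) t = -(deriv w t + 1/2) ∧
      deriv (fun ξ => B ξ t 0 0) x = 1/2 ∧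
      deriv (fun ξ => B ξ t 0 1) x = 0 ∧
      deriv (fun ξ => B ξ t 1 0) x = 0 ∧
      deriv (fun ξ => B ξ t 1 1) x = -(1/2) := by
    intro x t ht
    have hu' := (hu t ht).hasDerivAt
    have hv' := (hv t ht).hasDerivAt
    have hw' := (hw t ht).hasDerivAt
    have h00 : HasDerivAt (fun τ : ℂ => x^2 + w τ + τ/2) (deriv w t + 1/2) t := by
      exact (((hasDerivAt_const t (x^2)).add hw').add ((hasDerivAt_id t).div_const 2)).congr_deriv (by ring)
    have h01 : HasDerivAt (fun τ : ℂ => (x - u τ) * v τ)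
        ((0 - deriv u t) * v t + (x - u t) * deriv v t) t :=
      ((hasDerivAt_const t x).sub hu').mul hv'
    have hg : HasDerivAt (fun τ : ℂ => 2 / v τ) (-(2 * deriv v t) / v t ^ 2) t := by
      have := (hasDerivAt_const t (2:ℂ)).div hv' (hv0 t ht)
      exact this.congr_deriv (by ring)
    have hh : HasDerivAt (fun τ : ℂ => x * w τ + u τ * w τ - α + 1/2)
        (x * deriv w t + (deriv u t * w t + u t * deriv w t)) t := by
      simpa using ((((hasDerivAt_const t x).mul hw').add (hu'.mul hw')).sub_const α).add_const
        ((1:ℂ)/2)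
    have h10 := hg.neg.mul hh
    refine ⟨?_, ?_, ?_, ?_, ?_, ?_, ?_, ?_⟩
    · rw [show (fun τ => A x τ 0 0) = fun τ : ℂ => x^2 + w τ + τ/2 by funext τ; simp [hA]]
      exact h00.deriv
    · rw [show (fun τ => A x τ 0 1) = fun τ : ℂ => (x - u τ) * v τ by funext τ; simp [hA]]
      exact h01.deriv
    · rw [show (fun τ => A x τ 1 0)
          = fun τ : ℂ => -(2 / v τ) * (x * w τ + u τ * w τ - α + 1/2) by funext τ; simp [hA]]
      exact h10.deriv
    · rw [show (fun τ => A x τ 1 1) = fun τ : ℂ => -(x^2 + w τ + τ/2) by funext τ; simp [hA]]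
      exact h00.neg.deriv
    · rw [show (fun ξ => B ξ t 0 0) = fun ξ : ℂ => ξ/2 by funext ξ; simp [hB]]
      simpa using ((hasDerivAt_id x).div_const 2).deriv
    · rw [show (fun ξ => B ξ t 0 1) = fun _ : ℂ => v t / 2 by funext ξ; simp [hB]]
      simp
    · rw [show (fun ξ => B ξ t 1 0) = fun _ : ℂ => -(w t / v t) by funext ξ; simp [hB]]
      simp
    · rw [show (fun ξ => B ξ t 1 1) = fun ξ : ℂ => -(ξ/2) by funext ξ; simp [hB]]
      simpa using ((hasDerivAt_id x).div_const 2).neg.deriv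
  constructor
  · intro h t ht
    have v0 := hv0 t ht
    have E1 := h 0 t ht 0 0
    have E2 := h 0 t ht 0 1
    have E3 := h 1 t ht 0 1
    rw [(D 0 t ht).1, (D 0 t ht).2.2.2.2.1, hA, hB] at E1
    rw [(D 0 t ht).2.1, (D 0 t ht).2.2.2.2.2.1, hA, hB] at E2
    rw [(D 1 t ht).2.1, (D 1 t ht).2.2.2.2.2.1, hA, hB] at E3
    simp [Matrix.mul_apply, Fin.sum_univ_two] at E1 E2 E3
    have hv2 : deriv v t = -(u t) * v t := by linear_combination E3 - E2
    have hu2 : deriv u t * v t = ((u t) ^ 2 + w t + t / 2) * v t := by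
      linear_combination -E2 - u t * hv2
    refine ⟨mul_right_cancel₀ v0 hu2, hv2, ?_⟩
    field_simp at E1
    have hne : (4 : ℂ) * v t ^ 2 ≠ 0 := by
      exact mul_ne_zero (by norm_num) (pow_ne_zero _ v0)
    refine mul_right_cancel₀ hne ?_
    linear_combination 2 * v t ^ 2 * E1
  · intro h x t ht i j
    obtain ⟨h1, h2, h3⟩ := h t ht
    have v0 := hv0 t ht
    obtain ⟨d1, d2, d3, d4, d5, d6, d7, d8⟩ := D x t ht
    have key : ∀ i j : Fin 2,
        deriv (fun τ => A x τ i j) t - deriv (fun ξ => B ξ t i j) x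
          + (A x t * B x t - B x t * A x t) i j = 0 := by
      have hAB : ∀ i j : Fin 2, (A x t * B x t - B x t * A x t) i j =
          (A x t i 0 * B x t 0 j + A x t i 1 * B x t 1 j)
            - (B x t i 0 * A x t 0 j + B x t i 1 * A x t 1 j) := by
        intro i j
        simp [Matrix.mul_apply, Fin.sum_univ_two]
      have hinv : v t * (v t)⁻¹ = 1 := mul_inv_cancel₀ v0
      intro i j
      rw [hAB]
      fin_cases i <;> fin_cases j <;>
        simp only [Fin.zero_eta, Fin.mk_one]
      · rw [d1, d5, hA, hB, h3]
        simp only [Matrix.of_apply, Matrix.cons_val', Matrix.cons_val_zero, Matrix.cons_val_one,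
          Matrix.head_cons, Matrix.empty_val', Matrix.cons_val_fin_one, Matrix.head_fin_const]
        linear_combination (2 * u t * w t - α + 1 / 2) * hinv
      · rw [d2, d6, hA, hB, h1, h2]
        simp only [Matrix.of_apply, Matrix.cons_val', Matrix.cons_val_zero, Matrix.cons_val_one,
          Matrix.head_cons, Matrix.empty_val', Matrix.cons_val_fin_one, Matrix.head_fin_const]
        ring
      · rw [d3, d7, hA, hB, h1, h2, h3]
        simp only [Matrix.of_apply, Matrix.cons_val', Matrix.cons_val_zero, Matrix.cons_val_one,
          Matrix.head_cons, Matrix.empty_val', Matrix.cons_val_fin_one, Matrix.head_fin_const]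
        linear_combination (-2 * u t * (v t)⁻¹ * (x * w t + u t * w t - α + 1 / 2)) * hinv
      · rw [d4, d8, hA, hB, h3]
        simp only [Matrix.of_apply, Matrix.cons_val', Matrix.cons_val_zero, Matrix.cons_val_one,
          Matrix.head_cons, Matrix.empty_val', Matrix.cons_val_fin_one, Matrix.head_fin_const]
        linear_combination (-(2 * u t * w t - α + 1 / 2)) * hinv
    exact key i j
end

section
/- Let U ⊆ ℂ be open, let m₁₁ : ℂ → ℂ be differentiable on U, m₂₁ : ℂ → ℂ arbitrary, m₁₂ : ℂ → ℂ twice differentiable and nowhere zero on U, and let g : ℂ → ℂ be differentiable on U with g(x)² = m₁₂(x) for all x ∈ U. Define M(x) := [[m₁₁(x), m₁₂(x)], [m₂₁(x), −m₁₁(x)]] and the gauge matrix G(x) := [[1/g(x), 0], [−m₁₂'(x)/(2·g(x)³) + m₁₁(x)/g(x), g(x)]]. Then for all x ∈ U: G'(x)·G(x)⁻¹ + G(x)·M(x)·G(x)⁻¹ = [[0, 1], [V(x), 0]], where V(x) := m₁₂(x)·m₂₁(x) + m₁₁(x)² + m₁₁'(x) − m₁₁(x)·m₁₂'(x)/m₁₂(x)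 − m₁₂''(x)/(2·m₁₂(x)) + (3/4)·(m₁₂'(x)/m₁₂(x))². In particular, if Φ solves the traceless 2×2 system Φ' = M·Φ on U, then W := G·Φ solves W' = [[0,1],[V,0]]·W, i.e. the first row of W solves the scalar ODE y'' = V·y. -/
set_option maxHeartbeats 2000000


/-- the gauge transformation G turns the traceless system Φ' = MΦ
into companion form: G'·G⁻¹ + G·M·G⁻¹ = [[0,1],[V,0]] with the stated potential V. -/
theorem gauge_transformation_to_scalar_ode
    (U : Set ℂ) (hU : IsOpen U)
    (m11 m21 m12 g : ℂ → ℂ)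
    (h11 : ∀ x ∈ U, DifferentiableAt ℂ m11 x)
    (h12 : ∀ x ∈ U, DifferentiableAt ℂ m12 x)
    (h12' : ∀ x ∈ U, DifferentiableAt ℂ (deriv m12) x)
    (h12ne : ∀ x ∈ U, m12 x ≠ 0)
    (hg : ∀ x ∈ U, DifferentiableAt ℂ g x)
    (hg2 : ∀ x ∈ U, (g x) ^ 2 = m12 x)
    (M G : ℂ → Matrix (Fin 2) (Fin 2) ℂ)
    (hM : ∀ x, M x = !![m11 x, m12 x; m21 x, -m11 x])
    (hG : ∀ x, G x = !![1 / g x, 0;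
        -(deriv m12 x) / (2 * (g x) ^ 3) + m11 x / g x, g x])
    (V : ℂ → ℂ)
    (hV : ∀ x, V x = m12 x * m21 x + (m11 x) ^ 2 + deriv m11 x
        - m11 x * deriv m12 x / m12 x - deriv (deriv m12) x / (2 * m12 x)
        + (3 / 4) * (deriv m12 x / m12 x) ^ 2) :
    ∀ x ∈ U,
      (Matrix.of fun i j => deriv (fun z => G z i j) x) * (G x)⁻¹
        + G x * M x * (G x)⁻¹ = !![0, 1; V x, 0] := by
  intro x hx
  have hgx : g x ≠ 0 := by
    intro h
    apply h12ne x hx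
    rw [← hg2 x hx, h]; ring
  have hm12 : m12 x = g x ^ 2 := (hg2 x hx).symm
  have hdg := hg x hx
  have hd11 := h11 x hx
  have hd12' := h12' x hx
  have key : deriv m12 x = 2 * g x * deriv g x := by
    have hev : m12 =ᶠ[nhds x] fun z => g z ^ 2 := by
      filter_upwards [hU.mem_nhds hx] with z hz using (hg2 z hz).symm
    rw [hev.deriv_eq, (hdg.hasDerivAt.fun_pow 2).deriv]; ring
  have e00 : HasDerivAt (fun z => 1 / g z) (-(deriv g x) / g x ^ 2) x := by
    simpa [one_div] using hdg.hasDerivAt.fun_inv hgx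
  have hden : 2 * g x ^ 3 ≠ 0 := mul_ne_zero two_ne_zero (pow_ne_zero 3 hgx)
  have e10 : HasDerivAt (fun z => -(deriv m12 z) / (2 * g z ^ 3) + m11 z / g z)
      ((-(deriv (deriv m12) x) * (2 * g x ^ 3)
        - -(deriv m12 x) * (2 * (3 * g x ^ 2 * deriv g x))) / (2 * g x ^ 3) ^ 2
       + (deriv m11 x * g x - m11 x * deriv g x) / g x ^ 2) x :=
    (hd12'.hasDerivAt.neg.div ((hdg.hasDerivAt.pow 3).const_mul 2) hden).add
      (hd11.hasDerivAt.div hdg.hasDerivAt hgx)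
  have hG' : (Matrix.of fun i j => deriv (fun z => G z i j) x)
      = !![-(deriv g x) / g x ^ 2, 0;
          (-(deriv (deriv m12) x) * (2 * g x ^ 3)
            - -(deriv m12 x) * (2 * (3 * g x ^ 2 * deriv g x))) / (2 * g x ^ 3) ^ 2
           + (deriv m11 x * g x - m11 x * deriv g x) / g x ^ 2, deriv g x] := by
    ext i j
    fin_cases i <;> fin_cases j
    · show deriv (fun z => G z 0 0) x = -(deriv g x) / g x ^ 2
      rw [show (fun z => G z 0 0) = fun z => 1 / g z from funext fun z => by rw [hG]; simp]
      exact e00.deriv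
    · show deriv (fun z => G z 0 1) x = 0
      rw [show (fun z => G z 0 1) = fun _ => (0:ℂ) from funext fun z => by rw [hG]; simp]
      exact deriv_const x 0
    · show deriv (fun z => G z 1 0) x = _
      rw [show (fun z => G z 1 0)
          = fun z => -(deriv m12 z) / (2 * g z ^ 3) + m11 z / g z from funext fun z => by
        rw [hG]; simp]
      exact e10.deriv
    · show deriv (fun z => G z 1 1) x = deriv g x
      rw [show (fun z => G z 1 1) = g from funext fun z => by rw [hG]; simp]
  have hinv : (G x)⁻¹ = !![g x, 0; deriv m12 x / (2 * g x ^ 3) - m11 x / g x, 1 / g x] := by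
    apply Matrix.inv_eq_right_inv
    rw [hG]
    ext i j
    fin_cases i <;> fin_cases j <;>
      simp [Matrix.mul_apply, Fin.sum_univ_two] <;> field_simp <;> ring
  rw [hG', hinv, hG x, hM x, Matrix.mul_fin_two, Matrix.mul_fin_two, Matrix.mul_fin_two]
  ext i j
  fin_cases i <;> fin_cases j <;>
    simp only [Matrix.add_apply, Matrix.of_apply, Matrix.cons_val', Matrix.cons_val_zero,
      Matrix.cons_val_one, Matrix.head_cons, Matrix.empty_val', Matrix.cons_val_fin_one,
      Matrix.head_fin_const, Fin.isValue, Fin.zero_eta, Fin.mk_one, hV, key, hm12] <;>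
    first
      | (field_simp [hgx]; ring1)
      | (ring_nf; field_simp [hgx]; ring_nf; field_simp [hgx]; ring1)
end

section
/- For every n ∈ ℕ there exists a unique polynomial B ∈ ℂ[X] satisfying B + 2X·B' − (1/2)·B''' = Xⁿ, where ' denotes the formal derivative in ℂ[X]. Moreover this B has degree n and leading coefficient 1/(2n+1). -/
open Polynomial

noncomputable def Lop (B : Polynomial ℂ) : Polynomial ℂ :=
  B + 2 * X * derivative B - C (1/2) * derivative (derivative (derivative B))

noncomputable def Bpoly : ℕ → Polynomial ℂ
  | 0 => C 1
  | 1 => C (1/3) * X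
  | 2 => C (1/5) * X ^ 2
  | (n+3) => C ((2*(n:ℂ)+7)⁻¹) *
      (X ^ (n+3) + C (((n:ℂ)+3)*((n:ℂ)+2)*((n:ℂ)+1)/2) * Bpoly n)

lemma Lop_C_mul (a : ℂ) (B : Polynomial ℂ) : Lop (C a * B) = C a * Lop B := by
  simp [Lop]; ring

lemma Lop_add (p q : Polynomial ℂ) : Lop (p + q) = Lop p + Lop q := by
  simp [Lop]; ring

lemma Lop_Xpow (n : ℕ) : Lop (X ^ (n+3)) =
    C (2*(n:ℂ)+7) * X ^ (n+3) - C (((n:ℂ)+3)*((n:ℂ)+2)*((n:ℂ)+1)/2) * X ^ n := by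
  simp only [Lop, derivative_X_pow, derivative_C_mul]
  apply Polynomial.funext
  intro x
  simp only [Nat.add_sub_cancel, show n+3-1 = n+2 from rfl, show n+2-1 = n+1 from rfl,
    show n+1-1 = n from rfl, eval_add, eval_sub, eval_mul, eval_pow, eval_C, eval_X,
    eval_ofNat]
  push_cast
  ring

lemma Lop_B : ∀ n, Lop (Bpoly n) = X ^ n
  | 0 => by simp [Bpoly, Lop]
  | 1 => by
      simp only [Bpoly, Lop_C_mul, Lop]
      simp [derivative_X]
      apply Polynomial.funext
      intro x
      simp
      ring
  | 2 => by
      simp only [Bpoly, Lop_C_mul, Lop]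
      simp [derivative_X_pow]
      apply Polynomial.funext
      intro x
      simp
      ring
  | (n+3) => by
      have ih := Lop_B n
      have h7 : (2*(n:ℂ)+7) ≠ 0 := by
        have h := Nat.cast_ne_zero (R := ℂ).mpr (show 2*n+7 ≠ 0 by omega)
        push_cast at h
        exact h
      rw [Bpoly, Lop_C_mul, Lop_add, Lop_C_mul, ih, Lop_Xpow, sub_add_cancel,
        ← mul_assoc, ← C_mul, inv_mul_cancel₀ h7, C_1, one_mul]

lemma Lop_ker {B : Polynomial ℂ} (h : Lop B = 0) : B = 0 := by
  by_contra hB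
  have hc : B.coeff B.natDegree ≠ 0 := mt leadingCoeff_eq_zero.mp hB
  set d := B.natDegree with hd
  have h0 : (Lop B).coeff d = 0 := by rw [h]; simp
  have hD1 : (derivative B).coeff d = 0 := by
    rw [coeff_derivative]
    simp [coeff_eq_zero_of_natDegree_lt (by omega : d < d + 1)]
  have hXD : (X * derivative B).coeff d = d * B.coeff d := by
    cases d with
    | zero => simp [mul_coeff_zero]
    | succ k =>
        rw [coeff_X_mul, coeff_derivative]
        push_cast
        ring
  have hD3 : (derivative (derivative (derivative B))).coeff d = 0 := by
    rw [coeff_derivative, coeff_derivative, coeff_derivative,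
      coeff_eq_zero_of_natDegree_lt (by omega : B.natDegree < d + 3)]
    ring
  rw [Lop, show (2:Polynomial ℂ) * X * derivative B = C 2 * (X * derivative B) by
      rw [show (2:Polynomial ℂ) = C 2 from (map_ofNat C 2).symm]; ring] at h0
  rw [coeff_sub, coeff_add, coeff_C_mul, coeff_C_mul, hXD, hD3] at h0
  have : B.coeff d * (1 + 2 * d) = 0 := by linear_combination h0
  have h2d : (1 + 2 * (d:ℂ)) ≠ 0 := by
    have h := Nat.cast_ne_zero (R := ℂ).mpr (show 1 + 2*d ≠ 0 by omega)
    push_cast at h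
    exact h
  exact hc ((mul_eq_zero.mp this).resolve_right h2d)

lemma Bpoly_deg : ∀ n, (Bpoly n).degree = (n : ℕ) ∧
    (Bpoly n).leadingCoeff = 1 / (2 * (n:ℂ) + 1)
  | 0 => by
      constructor
      · rw [Bpoly, degree_C (by norm_num)]
        rfl
      · rw [Bpoly, leadingCoeff_C]
        norm_num
  | 1 => by
      constructor
      · rw [Bpoly, degree_C_mul (by norm_num), degree_X]
        rfl
      · rw [Bpoly, leadingCoeff_mul, leadingCoeff_C, leadingCoeff_X]
        norm_num
  | 2 => by
      constructor
      · rw [Bpoly, degree_C_mul (by norm_num), degree_X_pow]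
      · rw [Bpoly, leadingCoeff_mul, leadingCoeff_C, leadingCoeff_X_pow]
        norm_num
  | (n+3) => by
      obtain ⟨ihd, ihl⟩ := Bpoly_deg n
      have h7 : (2*(n:ℂ)+7) ≠ 0 := by
        have h := Nat.cast_ne_zero (R := ℂ).mpr (show 2*n+7 ≠ 0 by omega)
        push_cast at h
        exact h
      have hlt : (C (((n:ℂ)+3)*((n:ℂ)+2)*((n:ℂ)+1)/2) * Bpoly n).degree
          < (X ^ (n+3) : Polynomial ℂ).degree := by
        rw [degree_X_pow]
        calc (C (((n:ℂ)+3)*((n:ℂ)+2)*((n:ℂ)+1)/2) * Bpoly n).degree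
            ≤ _ + _ := degree_mul_le _ _
          _ ≤ 0 + (n:ℕ) := add_le_add degree_C_le (le_of_eq ihd)
          _ < ((n+3 : ℕ) : WithBot ℕ) := by
              rw [zero_add]
              exact_mod_cast Nat.lt_add_of_pos_right (by norm_num)
      constructor
      · rw [Bpoly, degree_C_mul (inv_ne_zero h7), add_comm (X ^ (n+3)),
          degree_add_eq_right_of_degree_lt hlt, degree_X_pow]
      · rw [Bpoly, leadingCoeff_mul, leadingCoeff_C, add_comm (X ^ (n+3)),
          leadingCoeff_add_of_degree_lt hlt, leadingCoeff_X_pow]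
        push_cast
        rw [mul_one, one_div]
        congr 1
        ring

lemma Lop_uniq {B : Polynomial ℂ} {n : ℕ} (hB : Lop B = X ^ n) : B = Bpoly n := by
  have h : Lop (B - Bpoly n) = 0 := by
    have he : Lop (B - Bpoly n) = Lop B - Lop (Bpoly n) := by simp [Lop]; ring
    rw [he, hB, Lop_B n, sub_self]
  exact sub_eq_zero.mp (Lop_ker h)

/-- for every n there exists a unique polynomial B with
B + 2X·B' − (1/2)B''' = Xⁿ; it has degree n and leading coefficient 1/(2n+1). -/
theorem airy_primitive_polynomial (n : ℕ) :
    (∃! B : Polynomial ℂ,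
      B + 2 * Polynomial.X * Polynomial.derivative B
        - Polynomial.C (1 / 2)
          * Polynomial.derivative (Polynomial.derivative (Polynomial.derivative B))
        = Polynomial.X ^ n) ∧
    (∀ B : Polynomial ℂ,
      B + 2 * Polynomial.X * Polynomial.derivative B
        - Polynomial.C (1 / 2)
          * Polynomial.derivative (Polynomial.derivative (Polynomial.derivative B))
        = Polynomial.X ^ n →
      B.degree = (n : ℕ) ∧ B.leadingCoeff = 1 / (2 * (n : ℂ) + 1)) := by
  constructor
  · exact ⟨Bpoly n, Lop_B n, fun B hB => Lop_uniq hB⟩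
  · intro B hB
    rw [Lop_uniq hB]
    exact Bpoly_deg n
end

section
/- Let n ∈ ℕ and let B ∈ ℂ[X] satisfy B + 2X·B' − (1/2)·B''' = Xⁿ; set A := X·B − (1/2)·B'' and C := B'. Let f, g : ℂ → ℂ be twice differentiable solutions of the Airy equation, i.e. f''(x) = x·f(x) and g''(x) = x·g(x) for all x ∈ ℂ. Then for every x ∈ ℂ, the derivative at x of the function z ↦ A(z)·f(z)·g(z) − B(z)·f'(z)·g'(z) + C(z)·(f(z)·g'(z) + g(z)·f'(z))/2 equals xⁿ·f(x)·g(x). In particular (taking g = f), xⁿ·f(x)² = d/dx [A(x)·f(x)² − B(x)·f'(x)² + C(x)·f(x)·f'(x)]. -/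
/-- with B solving B + 2X·B' − (1/2)B''' = Xⁿ, A = X·B − (1/2)B'',
C = B', and f, g solutions of the Airy equation, the function
A·f·g − B·f'·g' + C·(f·g' + g·f')/2 is an antiderivative of xⁿ·f·g. -/
theorem airy_moment_antiderivative
    (n : ℕ) (Bp Ap Cp : Polynomial ℂ)
    (hB : Bp + 2 * Polynomial.X * Polynomial.derivative Bp
        - Polynomial.C (1 / 2)
          * Polynomial.derivative (Polynomial.derivative (Polynomial.derivative Bp))
        = Polynomial.X ^ n)
    (hA : Ap = Polynomial.X * Bp
        - Polynomial.C (1 / 2) * Polynomial.derivative (Polynomial.derivative Bp))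
    (hC : Cp = Polynomial.derivative Bp)
    (f g : ℂ → ℂ)
    (hf : Differentiable ℂ f) (hf' : Differentiable ℂ (deriv f))
    (hg : Differentiable ℂ g) (hg' : Differentiable ℂ (deriv g))
    (hfode : ∀ x : ℂ, deriv (deriv f) x = x * f x)
    (hgode : ∀ x : ℂ, deriv (deriv g) x = x * g x) :
    ∀ x : ℂ,
      HasDerivAt (fun z => Ap.eval z * f z * g z - Bp.eval z * deriv f z * deriv g z
          + Cp.eval z * (f z * deriv g z + g z * deriv f z) / 2)
        (x ^ n * f x * g x) x := by
  subst hA hC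
  intro x
  have hfd := (hf x).hasDerivAt
  have hgd := (hg x).hasDerivAt
  have hf2 : HasDerivAt (deriv f) (x * f x) x := hfode x ▸ (hf' x).hasDerivAt
  have hg2 : HasDerivAt (deriv g) (x * g x) x := hgode x ▸ (hg' x).hasDerivAt
  have hPA := (Polynomial.X * Bp - Polynomial.C (1/2 : ℂ)
    * Polynomial.derivative (Polynomial.derivative Bp)).hasDerivAt x
  have hPB := Bp.hasDerivAt x
  have hPC := (Polynomial.derivative Bp).hasDerivAt x
  have H := (((hPA.mul hfd).mul hgd).sub ((hPB.mul hf2).mul hg2)).add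
    (((hPC.mul ((hfd.mul hg2).add (hgd.mul hf2)))).div_const 2)
  convert H using 1
  · rfl
  · rfl
  · rfl
  have hBx := congrArg (Polynomial.eval x) hB
  simp [Polynomial.derivative_mul] at hBx ⊢
  ring_nf at hBx ⊢
  linear_combination -(f x * g x) * hBx
end

section
/- For all (a, b, c) ∈ ℂ³, the system of Fock–Goncharov equations a·c + a + 1 = 0, b·a + b + 1 = 0, c·b + c + 1 = 0 holds if and only if there exists ρ ∈ ℂ with ρ ≠ 0 and ρ ≠ −1 such that a = ρ, b = −1/(ρ + 1), and c = −(ρ + 1)/ρ. In particular, every solution satisfies a·b·c = 1, so the solution set is an affine rational curve in ℂ³. -/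
/-- the Fock–Goncharov system a·c + a + 1 = 0, b·a + b + 1 = 0,
c·b + c + 1 = 0 is the rational curve a = ρ, b = −1/(ρ+1), c = −(ρ+1)/ρ
(ρ ≠ 0, −1); moreover every solution satisfies a·b·c = 1. -/
theorem fock_goncharov_curve (a b c : ℂ) :
    ((a * c + a + 1 = 0 ∧ b * a + b + 1 = 0 ∧ c * b + c + 1 = 0) ↔
      (∃ ρ : ℂ, ρ ≠ 0 ∧ ρ ≠ -1 ∧ a = ρ ∧ b = -1 / (ρ + 1) ∧ c = -(ρ + 1) / ρ)) ∧
    ((a * c + a + 1 = 0 ∧ b * a + b + 1 = 0 ∧ c * b + c + 1 = 0) → a * b * c = 1) := by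
  have key : (a * c + a + 1 = 0 ∧ b * a + b + 1 = 0 ∧ c * b + c + 1 = 0) →
      (∃ ρ : ℂ, ρ ≠ 0 ∧ ρ ≠ -1 ∧ a = ρ ∧ b = -1 / (ρ + 1) ∧ c = -(ρ + 1) / ρ) := by
    rintro ⟨h1, h2, h3⟩
    have ha : a ≠ 0 := by
      intro h; rw [h] at h1; simp at h1
    have ha1 : a + 1 ≠ 0 := by
      intro h
      have : b * (a + 1) + 1 = 0 := by ring_nf; linear_combination h2
      rw [h] at this; simp at this
    refine ⟨a, ha, fun h => ha1 (by rw [h]; ring), rfl, ?_, ?_⟩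
    · rw [eq_div_iff ha1]
      linear_combination h2
    · rw [eq_div_iff ha]
      linear_combination h1
  constructor
  · constructor
    · exact key
    · rintro ⟨ρ, hρ0, hρ1, rfl, rfl, rfl⟩
      have h1 : a + 1 ≠ 0 := fun h => hρ1 (by linear_combination h)
      clear key
      refine ⟨?_, ?_, ?_⟩ <;> field_simp <;> ring
  · rintro h
    obtain ⟨ρ, hρ0, hρ1, rfl, rfl, rfl⟩ := key h
    have h1 : a + 1 ≠ 0 := fun h => hρ1 (by linear_combination h)
    field_simp
end

section
/- Let α, a ∈ ℂ, let ε ∈ {1, −1}, let U be an open neighbourhood of a, and let h : ℂ → ℂ be holomorphic on U. Suppose that u(t) := ε/(t − a) + h(t) satisfies the second Painlevé equation u''(t) = 2·u(t)³ + t·u(t) + α for all t ∈ U ∖ {a} (so u has a simple pole at a with residue ε). Then h(a) = 0, h'(a) = −ε·a/6, and h''(a) = −(α + ε)/2. Equivalently, near a pole of residue +1 one has u(t) = 1/(t−a) − (a/6)(t−a) − ((α+1)/4)(t−a)² + O((t−a)³), and near a pole of residue −1 one has u(t) = −1/(t−a) + (a/6)(t−a) − ((α−1)/4)(t−a)² +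 O((t−a)³). -/
open Filter Topology

/-- helper: analytic at a point implies deriv analytic there -/
lemma analyticAt_deriv' {f : ℂ → ℂ} {a : ℂ} (hf : AnalyticAt ℂ f a) :
    AnalyticAt ℂ (deriv f) a := by
  obtain ⟨s, hs, hf'⟩ := hf.exists_mem_nhds_analyticOnNhd
  exact hf'.deriv a (mem_of_mem_nhds hs)

/-- helper: dslope analytic -/
lemma analyticAt_dslope' {f : ℂ → ℂ} {a : ℂ} (hf : AnalyticAt ℂ f a) :
    AnalyticAt ℂ (dslope f a) a := by
  obtain ⟨p, hp⟩ := hf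
  exact hp.has_fpower_series_dslope_fslope.analyticAt

/-- helper: equal limits through punctured nbhd -/
lemma eq_at_of_punctured {f g : ℂ → ℂ} {a : ℂ} (hf : ContinuousAt f a)
    (hg : ContinuousAt g a) (hfg : ∀ᶠ t in 𝓝[≠] a, f t = g t) : f a = g a :=
  tendsto_nhds_unique ((hf.tendsto.mono_left nhdsWithin_le_nhds).congr' hfg)
    (hg.tendsto.mono_left nhdsWithin_le_nhds)

/-- helper: second derivative equals twice derivative of dslope -/
lemma deriv_deriv_eq_dslope {f : ℂ → ℂ} {a : ℂ} (hf : AnalyticAt ℂ f a) :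
    deriv (deriv f) a = 2 * deriv (dslope f a) a := by
  set g := dslope f a with hg_def
  have hg : AnalyticAt ℂ g a := analyticAt_dslope' hf
  have hfact : ∀ t, f t = f a + (t - a) * g t := by
    intro t
    have := sub_smul_dslope f a t
    rw [smul_eq_mul] at this
    rw [hg_def]; linear_combination -this
  have hderiv : ∀ᶠ t in 𝓝 a, deriv f t = g t + (t - a) * deriv g t := by
    filter_upwards [hg.eventually_analyticAt] with t hgt
    have h1 : HasDerivAt (fun s => f a + (s - a) * g s)
        (1 * g t + (t - a) * deriv g t) t :=
      (((hasDerivAt_id t).sub_const a).mul hgt.differentiableAt.hasDerivAt).const_add (f a)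
    have h2 : HasDerivAt f (1 * g t + (t - a) * deriv g t) t :=
      h1.congr_of_eventuallyEq (Filter.Eventually.of_forall hfact)
    rw [h2.deriv]; ring
  rw [Filter.EventuallyEq.deriv_eq hderiv]
  have h3 : HasDerivAt (fun t => g t + (t - a) * deriv g t)
      (deriv g a + (1 * deriv g a + (a - a) * deriv (deriv g) a)) a :=
    hg.differentiableAt.hasDerivAt.add
      (((hasDerivAt_id a).sub_const a).mul (analyticAt_deriv' hg).differentiableAt.hasDerivAt)
  rw [h3.deriv]; ring

/-- Laurent expansion of a Painlevé II transcendent at a simple pole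
t = a of residue ε = ±1: if u(t) = ε/(t−a) + h(t) solves PII on U ∖ {a} with h
holomorphic on U, then h(a) = 0, h'(a) = −ε·a/6, h''(a) = −(α+ε)/2. -/
theorem painleveII_laurent_at_pole
    (α a ε : ℂ) (hε : ε = 1 ∨ ε = -1)
    (U : Set ℂ) (hU : IsOpen U) (ha : a ∈ U)
    (h : ℂ → ℂ) (hh : DifferentiableOn ℂ h U)
    (hode : ∀ t ∈ U \ {a},
      deriv (deriv (fun s => ε / (s - a) + h s)) t
        = 2 * (ε / (t - a) + h t) ^ 3 + t * (ε / (t - a) + h t) + α) :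
    h a = 0 ∧ deriv h a = -ε * a / 6 ∧ deriv (deriv h) a = -(α + ε) / 2 := by
  have hε2 : ε ^ 2 = 1 := by rcases hε with rfl | rfl <;> ring
  have hVopen : IsOpen (U \ {a}) := hU.sdiff isClosed_singleton
  have hA : AnalyticOnNhd ℂ h U := hh.analyticOnNhd hU
  have hA1 : AnalyticOnNhd ℂ (deriv h) U := hA.deriv
  have hA2 : AnalyticOnNhd ℂ (deriv (deriv h)) U := hA1.deriv
  have hVnhds : U \ {a} ∈ 𝓝[≠] a := by
    rw [mem_nhdsWithin]
    exact ⟨U, hU, ha, fun x hx => ⟨hx.1, hx.2⟩⟩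
  -- first derivative of u on U \ {a}
  have hderiv1 : ∀ t ∈ U \ {a}, deriv (fun s => ε / (s - a) + h s) t
      = -ε / (t - a) ^ 2 + deriv h t := by
    intro t ht
    have hta : t ≠ a := by simpa using ht.2
    have hs : t - a ≠ 0 := sub_ne_zero.mpr hta
    have hinv : HasDerivAt (fun s => (s - a)⁻¹) (-1 / (t - a) ^ 2) t :=
      ((hasDerivAt_id t).sub_const a).inv hs
    have h1 : HasDerivAt (fun s => ε / (s - a)) (ε * (-1 / (t - a) ^ 2)) t := by
      simpa only [div_eq_mul_inv] using hinv.const_mul ε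
    have hd : HasDerivAt h (deriv h t) t := (hA t ht.1).differentiableAt.hasDerivAt
    rw [show (fun s => ε / (s - a) + h s) = (fun s => ε / (s - a)) + h from rfl, (h1.add hd).deriv]; ring
  -- second derivative of u on U \ {a}
  have hderiv2 : ∀ t ∈ U \ {a}, deriv (deriv (fun s => ε / (s - a) + h s)) t
      = 2 * ε / (t - a) ^ 3 + deriv (deriv h) t := by
    intro t ht
    have hta : t ≠ a := by simpa using ht.2
    have hs : t - a ≠ 0 := sub_ne_zero.mpr hta
    have heq : deriv (fun s => ε / (s - a) + h s)
        =ᶠ[𝓝 t] fun s => -ε / (s - a) ^ 2 + deriv h s := by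
      filter_upwards [hVopen.mem_nhds ht] with s hsV using hderiv1 s hsV
    rw [heq.deriv_eq]
    have hinv2 : HasDerivAt (fun s => ((s - a) ^ 2)⁻¹)
        (-(2 * (t - a) ^ 1 * 1) / ((t - a) ^ 2) ^ 2) t :=
      (((hasDerivAt_id t).sub_const a).pow 2).inv (pow_ne_zero 2 hs)
    have h1 : HasDerivAt (fun s => -ε / (s - a) ^ 2)
        (-ε * (-(2 * (t - a) ^ 1 * 1) / ((t - a) ^ 2) ^ 2)) t := by
      simpa only [div_eq_mul_inv] using hinv2.const_mul (-ε)
    have hd : HasDerivAt (deriv h) (deriv (deriv h) t) t :=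
      (hA1 t ht.1).differentiableAt.hasDerivAt
    rw [show (fun s => -ε / (s - a) ^ 2 + deriv h s) = (fun s => -ε / (s - a) ^ 2) + deriv h from rfl, (h1.add hd).deriv]
    field_simp
  -- polynomial identity E1
  have e1 : ∀ t ∈ U \ {a}, (t - a) ^ 2 * deriv (deriv h) t
      = 6 * h t + 6 * ε * (h t) ^ 2 * (t - a) + 2 * (h t) ^ 3 * (t - a) ^ 2
        + t * ε * (t - a) + (t * h t + α) * (t - a) ^ 2 := by
    intro t ht
    have hta : t ≠ a := by simpa using ht.2
    have hs : t - a ≠ 0 := sub_ne_zero.mpr hta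
    have e0 := hode t ht
    rw [hderiv2 t ht] at e0
    field_simp at e0
    refine mul_left_cancel₀ (pow_ne_zero 5 hs) ?_
    linear_combination (t - a) ^ 4 * e0 + (2 * (t - a) ^ 4 * ε + 6 * h t * (t - a) ^ 5) * hε2
  -- continuity facts at a
  have hch : ContinuousAt h a := (hA a ha).continuousAt
  have hc2 : ContinuousAt (deriv (deriv h)) a := (hA2 a ha).continuousAt
  -- Step: h a = 0
  have hha : h a = 0 := by
    have hcf : ContinuousAt (fun t => (t - a) ^ 2 * deriv (deriv h) t) a := by fun_prop
    have hcg : ContinuousAt (fun t => 6 * h t + 6 * ε * (h t) ^ 2 * (t - a)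
        + 2 * (h t) ^ 3 * (t - a) ^ 2 + t * ε * (t - a) + (t * h t + α) * (t - a) ^ 2) a := by
      fun_prop
    have := eq_at_of_punctured hcf hcg
      (by filter_upwards [hVnhds] with t ht using e1 t ht)
    simpa using this
  -- k = dslope h a
  set k : ℂ → ℂ := dslope h a with hk_def
  have hkA : AnalyticAt ℂ k a := analyticAt_dslope' (hA a ha)
  have hfact : ∀ t, h t = (t - a) * k t := by
    intro t
    have := sub_smul_dslope h a t
    rw [smul_eq_mul] at this
    rw [hk_def]; linear_combination -this + hha
  have hka_deriv : k a = deriv h a := dslope_same h a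
  -- identity E2
  have e2 : ∀ t ∈ U \ {a}, (t - a) * deriv (deriv h) t
      = 6 * k t + 6 * ε * (t - a) ^ 2 * (k t) ^ 2 + 2 * (t - a) ^ 4 * (k t) ^ 3
        + t * ε + t * (t - a) ^ 2 * k t + α * (t - a) := by
    intro t ht
    have hta : t ≠ a := by simpa using ht.2
    have hs : t - a ≠ 0 := sub_ne_zero.mpr hta
    have e1t := e1 t ht
    rw [hfact t] at e1t
    refine mul_left_cancel₀ hs ?_
    linear_combination e1t
  -- Step: deriv h a = -ε * a / 6
  have hka : k a = -ε * a / 6 := by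
    have hck : ContinuousAt k a := hkA.continuousAt
    have hcf : ContinuousAt (fun t => (t - a) * deriv (deriv h) t) a := by fun_prop
    have hcg : ContinuousAt (fun t => 6 * k t + 6 * ε * (t - a) ^ 2 * (k t) ^ 2
        + 2 * (t - a) ^ 4 * (k t) ^ 3 + t * ε + t * (t - a) ^ 2 * k t + α * (t - a)) a := by
      fun_prop
    have := eq_at_of_punctured hcf hcg
      (by filter_upwards [hVnhds] with t ht using e2 t ht)
    simp at this
    linear_combination -this / 6
  -- m = dslope k a
  set m : ℂ → ℂ := dslope k a with hm_def
  have hmA : AnalyticAt ℂ m a := analyticAt_dslope' hkA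
  have hkfact : ∀ t, k t = k a + (t - a) * m t := by
    intro t
    have := sub_smul_dslope k a t
    rw [smul_eq_mul] at this
    rw [hm_def]; linear_combination -this
  -- identity E3
  have e3 : ∀ t ∈ U \ {a}, deriv (deriv h) t
      = 6 * m t + ε + 6 * ε * (t - a) * (k t) ^ 2 + 2 * (t - a) ^ 3 * (k t) ^ 3
        + t * (t - a) * k t + α := by
    intro t ht
    have hta : t ≠ a := by simpa using ht.2
    have hs : t - a ≠ 0 := sub_ne_zero.mpr hta
    have e2t := e2 t ht
    refine mul_left_cancel₀ hs ?_
    linear_combination e2t + 6 * (hkfact t) + 6 * hka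
  -- Step: deriv (deriv h) a
  have hfinal : deriv (deriv h) a = 6 * m a + ε + α := by
    have hck : ContinuousAt k a := hkA.continuousAt
    have hcm : ContinuousAt m a := hmA.continuousAt
    have hcg : ContinuousAt (fun t => 6 * m t + ε + 6 * ε * (t - a) * (k t) ^ 2
        + 2 * (t - a) ^ 3 * (k t) ^ 3 + t * (t - a) * k t + α) a := by fun_prop
    have := eq_at_of_punctured hc2 hcg
      (by filter_upwards [hVnhds] with t ht using e3 t ht)
    simpa using this
  have hma : m a = deriv k a := dslope_same k a
  have h2d : deriv (deriv h) a = 2 * deriv k a := deriv_deriv_eq_dslope (hA a ha)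
  have hdd : deriv (deriv h) a = -(α + ε) / 2 := by
    rw [hma] at hfinal
    linear_combination (3/2) * h2d - (1/2) * hfinal
  exact ⟨hha, by rw [← hka_deriv, hka], hdd⟩
end

section
/- Let Ω ⊆ ℂ³ be open and let r : Ω → ℂ be holomorphic in all three variables (z, s, E) with r(z,s,E)² = Q(z,s,E) := z⁴ + s·z² + 2z + E and r ≠ 0 on Ω. Define the WKB correction term S₁ := (4·Q·∂²_z Q − 5·(∂_z Q)²)/(32·Q²·r) (i.e. S₁ = (4QQ'' − 5(Q')²)/(32·Q^{5/2}) with the branch Q^{1/2} = r). Then at every point of Ω: S₁ = −∂_s∂_E r − (s/6)·∂²_E r − (5/24)·∂²_z (1/r). Consequently the period of S₁ along any closed z-contour equals (−∂²/∂s∂E − (s/6)·∂²/∂E²) applied to the corresponding period of √Q. -/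
/-- Partial derivative in the first (z) variable. -/
noncomputable def pz (f : ℂ × ℂ × ℂ → ℂ) : ℂ × ℂ × ℂ → ℂ :=
  fun p => deriv (fun z => f (z, p.2.1, p.2.2)) p.1

/-- Partial derivative in the second (s) variable. -/
noncomputable def ps (f : ℂ × ℂ × ℂ → ℂ) : ℂ × ℂ × ℂ → ℂ :=
  fun p => deriv (fun s => f (p.1, s, p.2.2)) p.2.1

/-- Partial derivative in the third (E) variable. -/
noncomputable def pE (f : ℂ × ℂ × ℂ → ℂ) : ℂ × ℂ × ℂ → ℂ :=
  fun p => deriv (fun e => f (p.1, p.2.1, e)) p.2.2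

/-- derivative of the quartic in z -/
lemma wkb_poly1 (a b : ℂ) (w : ℂ) :
    HasDerivAt (fun x : ℂ => x ^ 4 + a * x ^ 2 + 2 * x + b)
      (4 * w ^ 3 + 2 * a * w + 2) w := by
  have h1 := hasDerivAt_pow 4 w
  have h2 := (hasDerivAt_pow 2 w).const_mul a
  have h3 := (hasDerivAt_id w).const_mul (2 : ℂ)
  have := ((h1.add h2).add h3).add_const b
  refine this.congr_deriv ?_
  push_cast
  ring

/-- derivative of the cubic in z -/
lemma wkb_poly2 (a : ℂ) (w : ℂ) :
    HasDerivAt (fun x : ℂ => 4 * x ^ 3 + 2 * a * x + 2)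
      (12 * w ^ 2 + 2 * a) w := by
  have h1 := (hasDerivAt_pow 3 w).const_mul (4 : ℂ)
  have h2 := (hasDerivAt_id w).const_mul (2 * a)
  have := (h1.add h2).add_const (2 : ℂ)
  refine this.congr_deriv ?_
  push_cast
  ring

/-- derivative in s of the quartic -/
lemma wkb_poly3 (z b : ℂ) (w : ℂ) :
    HasDerivAt (fun x : ℂ => z ^ 4 + x * z ^ 2 + 2 * z + b) (z ^ 2) w := by
  have h2 := (hasDerivAt_id w).mul_const (z ^ 2)
  have := ((h2.const_add (z ^ 4)).add_const (2 * z)).add_const b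
  simpa using this

/-- derivative in E of the quartic -/
lemma wkb_poly4 (z a : ℂ) (w : ℂ) :
    HasDerivAt (fun x : ℂ => z ^ 4 + a * z ^ 2 + 2 * z + x) (1 : ℂ) w := by
  have := (hasDerivAt_id w).const_add (z ^ 4 + a * z ^ 2 + 2 * z)
  simpa [add_assoc] using this

/-- for a holomorphic branch r of √Q, Q = z⁴ + s·z² + 2z + E, the WKB
correction S₁ = (4QQ'' − 5(Q')²)/(32Q²·r) satisfies
S₁ = −∂_s∂_E r − (s/6)∂²_E r − (5/24)∂²_z(1/r) on Ω. -/
theorem wkb_subleading_identity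
    (Ω : Set (ℂ × ℂ × ℂ)) (hΩ : IsOpen Ω)
    (r : ℂ × ℂ × ℂ → ℂ) (hr : DifferentiableOn ℂ r Ω)
    (Q : ℂ × ℂ × ℂ → ℂ)
    (hQ : ∀ p : ℂ × ℂ × ℂ, Q p = p.1 ^ 4 + p.2.1 * p.1 ^ 2 + 2 * p.1 + p.2.2)
    (hr2 : ∀ p ∈ Ω, (r p) ^ 2 = Q p)
    (hr0 : ∀ p ∈ Ω, r p ≠ 0) :
    ∀ p ∈ Ω,
      (4 * Q p * pz (pz Q) p - 5 * (pz Q p) ^ 2) / (32 * (Q p) ^ 2 * r p)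
        = -(ps (pE r) p) - (p.2.1 / 6) * pE (pE r) p
          - (5 / 24) * pz (pz (fun q => 1 / r q)) p := by
  -- eventual membership along the coordinate lines
  have hmemz : ∀ q ∈ Ω, ∀ᶠ w in nhds q.1, (w, q.2.1, q.2.2) ∈ Ω := by
    intro q hq
    have hc : ContinuousAt (fun w : ℂ => (w, q.2.1, q.2.2)) q.1 := by fun_prop
    exact hc.preimage_mem_nhds (hΩ.mem_nhds hq)
  have hmems : ∀ q ∈ Ω, ∀ᶠ w in nhds q.2.1, (q.1, w, q.2.2) ∈ Ω := by
    intro q hq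
    have hc : ContinuousAt (fun w : ℂ => (q.1, w, q.2.2)) q.2.1 := by fun_prop
    exact hc.preimage_mem_nhds (hΩ.mem_nhds hq)
  have hmemE : ∀ q ∈ Ω, ∀ᶠ w in nhds q.2.2, (q.1, q.2.1, w) ∈ Ω := by
    intro q hq
    have hc : ContinuousAt (fun w : ℂ => (q.1, q.2.1, w)) q.2.2 := by fun_prop
    exact hc.preimage_mem_nhds (hΩ.mem_nhds hq)
  -- differentiability along coordinate lines
  have hdiffz : ∀ q ∈ Ω, DifferentiableAt ℂ (fun w => r (w, q.2.1, q.2.2)) q.1 := by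
    intro q hq
    have h1 : DifferentiableAt ℂ (fun w : ℂ => (w, q.2.1, q.2.2)) q.1 := by fun_prop
    exact (hr.differentiableAt (hΩ.mem_nhds hq)).comp q.1 h1
  have hdiffs : ∀ q ∈ Ω, DifferentiableAt ℂ (fun w => r (q.1, w, q.2.2)) q.2.1 := by
    intro q hq
    have h1 : DifferentiableAt ℂ (fun w : ℂ => (q.1, w, q.2.2)) q.2.1 := by fun_prop
    exact (hr.differentiableAt (hΩ.mem_nhds hq)).comp q.2.1 h1
  have hdiffE : ∀ q ∈ Ω, DifferentiableAt ℂ (fun w => r (q.1, q.2.1, w)) q.2.2 := by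
    intro q hq
    have h1 : DifferentiableAt ℂ (fun w : ℂ => (q.1, q.2.1, w)) q.2.2 := by fun_prop
    exact (hr.differentiableAt (hΩ.mem_nhds hq)).comp q.2.2 h1
  -- first partial derivatives of r
  have hdz : ∀ q ∈ Ω, HasDerivAt (fun w => r (w, q.2.1, q.2.2))
      ((4 * q.1 ^ 3 + 2 * q.2.1 * q.1 + 2) / (2 * r q)) q.1 := by
    intro q hq
    have hg := hdiffz q hq
    have hev : (fun w => (r (w, q.2.1, q.2.2)) ^ 2) =ᶠ[nhds q.1]
        fun w => w ^ 4 + q.2.1 * w ^ 2 + 2 * w + q.2.2 := by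
      filter_upwards [hmemz q hq] with w hw
      rw [hr2 _ hw, hQ]
    have h2 : HasDerivAt (fun w => (r (w, q.2.1, q.2.2)) ^ 2)
        (4 * q.1 ^ 3 + 2 * q.2.1 * q.1 + 2) q.1 :=
      (wkb_poly1 q.2.1 q.2.2 q.1).congr_of_eventuallyEq hev
    have h3 : HasDerivAt (fun w => (r (w, q.2.1, q.2.2)) ^ 2)
        (2 * r q * deriv (fun w => r (w, q.2.1, q.2.2)) q.1) q.1 := by
      have := hg.hasDerivAt.fun_pow 2
      simpa [mul_comm, mul_assoc] using this
    have h4 := h3.unique h2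
    have hne : (2 : ℂ) * r q ≠ 0 := by
      simpa using hr0 q hq
    have key : deriv (fun w => r (w, q.2.1, q.2.2)) q.1
        = (4 * q.1 ^ 3 + 2 * q.2.1 * q.1 + 2) / (2 * r q) := by
      rw [eq_div_iff hne]
      linear_combination h4
    exact key ▸ hg.hasDerivAt
  have hds : ∀ q ∈ Ω, HasDerivAt (fun w => r (q.1, w, q.2.2))
      (q.1 ^ 2 / (2 * r q)) q.2.1 := by
    intro q hq
    have hg := hdiffs q hq
    have hev : (fun w => (r (q.1, w, q.2.2)) ^ 2) =ᶠ[nhds q.2.1]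
        fun w => q.1 ^ 4 + w * q.1 ^ 2 + 2 * q.1 + q.2.2 := by
      filter_upwards [hmems q hq] with w hw
      rw [hr2 _ hw, hQ]
    have h2 : HasDerivAt (fun w => (r (q.1, w, q.2.2)) ^ 2) (q.1 ^ 2) q.2.1 :=
      (wkb_poly3 q.1 q.2.2 q.2.1).congr_of_eventuallyEq hev
    have h3 : HasDerivAt (fun w => (r (q.1, w, q.2.2)) ^ 2)
        (2 * r q * deriv (fun w => r (q.1, w, q.2.2)) q.2.1) q.2.1 := by
      have := hg.hasDerivAt.fun_pow 2
      simpa [mul_comm, mul_assoc] using this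
    have h4 := h3.unique h2
    have hne : (2 : ℂ) * r q ≠ 0 := by
      simpa using hr0 q hq
    have key : deriv (fun w => r (q.1, w, q.2.2)) q.2.1 = q.1 ^ 2 / (2 * r q) := by
      rw [eq_div_iff hne]
      linear_combination h4
    exact key ▸ hg.hasDerivAt
  have hdE : ∀ q ∈ Ω, HasDerivAt (fun w => r (q.1, q.2.1, w))
      (1 / (2 * r q)) q.2.2 := by
    intro q hq
    have hg := hdiffE q hq
    have hev : (fun w => (r (q.1, q.2.1, w)) ^ 2) =ᶠ[nhds q.2.2]
        fun w => q.1 ^ 4 + q.2.1 * q.1 ^ 2 + 2 * q.1 + w := by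
      filter_upwards [hmemE q hq] with w hw
      rw [hr2 _ hw, hQ]
    have h2 : HasDerivAt (fun w => (r (q.1, q.2.1, w)) ^ 2) (1 : ℂ) q.2.2 :=
      (wkb_poly4 q.1 q.2.1 q.2.2).congr_of_eventuallyEq hev
    have h3 : HasDerivAt (fun w => (r (q.1, q.2.1, w)) ^ 2)
        (2 * r q * deriv (fun w => r (q.1, q.2.1, w)) q.2.2) q.2.2 := by
      have := hg.hasDerivAt.fun_pow 2
      simpa [mul_comm, mul_assoc] using this
    have h4 := h3.unique h2
    have hne : (2 : ℂ) * r q ≠ 0 := by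
      simpa using hr0 q hq
    have key : deriv (fun w => r (q.1, q.2.1, w)) q.2.2 = 1 / (2 * r q) := by
      rw [eq_div_iff hne]
      linear_combination h4
    exact key ▸ hg.hasDerivAt
  -- formula for pE r and pz (1/r) on Ω
  have hpEr : ∀ q ∈ Ω, pE r q = 1 / (2 * r q) := by
    intro q hq
    exact (hdE q hq).deriv
  have hpzinv : ∀ q ∈ Ω, pz (fun x => 1 / r x) q
      = -(4 * q.1 ^ 3 + 2 * q.2.1 * q.1 + 2) / (2 * (r q) ^ 3) := by
    intro q hq
    have h := (hdz q hq).inv (hr0 q hq)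
    have hd : deriv (fun w => (r (w, q.2.1, q.2.2))⁻¹) q.1
        = -((4 * q.1 ^ 3 + 2 * q.2.1 * q.1 + 2) / (2 * r q)) / (r q) ^ 2 := h.deriv
    have hne := hr0 q hq
    simp only [pz, one_div]
    rw [hd, ← neg_div, div_div]
    congr 1
    ring
  -- now work at the given point
  intro p hp
  obtain ⟨z, s, E⟩ := p
  set R := r (z, s, E) with hR
  have hRne : R ≠ 0 := hr0 _ hp
  -- ps (pE r)
  have hA : ps (pE r) (z, s, E) = -(2 * (z ^ 2 / (2 * R))) / (2 * R) ^ 2 := by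
    have hev : (fun w => pE r (z, w, E)) =ᶠ[nhds s]
        fun w => (2 * r (z, w, E))⁻¹ := by
      filter_upwards [hmems (z, s, E) hp] with w hw
      rw [hpEr _ hw, one_div]
    have hder : HasDerivAt (fun w => (2 * r (z, w, E))⁻¹)
        (-(2 * (z ^ 2 / (2 * R))) / (2 * R) ^ 2) s := by
      have h1 := (hds (z, s, E) hp).const_mul (2 : ℂ)
      exact h1.inv (by simpa using hRne)
    simp only [ps]
    rw [hev.deriv_eq]
    exact hder.deriv
  -- pE (pE r)
  have hB : pE (pE r) (z, s, E) = -(2 * (1 / (2 * R))) / (2 * R) ^ 2 := by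
    have hev : (fun w => pE r (z, s, w)) =ᶠ[nhds E]
        fun w => (2 * r (z, s, w))⁻¹ := by
      filter_upwards [hmemE (z, s, E) hp] with w hw
      rw [hpEr _ hw, one_div]
    have hder : HasDerivAt (fun w => (2 * r (z, s, w))⁻¹)
        (-(2 * (1 / (2 * R))) / (2 * R) ^ 2) E := by
      have h1 := (hdE (z, s, E) hp).const_mul (2 : ℂ)
      exact h1.inv (by simpa using hRne)
    rw [show pE (pE r) (z, s, E) = deriv (fun w => pE r (z, s, w)) E from rfl,
      hev.deriv_eq]
    exact hder.deriv
  -- pz (pz (1/r))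
  have hC : pz (pz (fun x => 1 / r x)) (z, s, E)
      = ((-(12 * z ^ 2 + 2 * s)) * (2 * R ^ 3)
          - (-(4 * z ^ 3 + 2 * s * z + 2))
            * (3 * R * (4 * z ^ 3 + 2 * s * z + 2)))
        / (2 * R ^ 3) ^ 2 := by
    have hev : (fun w => pz (fun x => 1 / r x) (w, s, E)) =ᶠ[nhds z]
        fun w => -(4 * w ^ 3 + 2 * s * w + 2) / (2 * (r (w, s, E)) ^ 3) := by
      filter_upwards [hmemz (z, s, E) hp] with w hw
      rw [hpzinv _ hw]
    have hf : HasDerivAt (fun w : ℂ => -(4 * w ^ 3 + 2 * s * w + 2))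
        (-(12 * z ^ 2 + 2 * s)) z := (wkb_poly2 s z).neg
    have hg : HasDerivAt (fun w => 2 * (r (w, s, E)) ^ 3)
        (3 * R * (4 * z ^ 3 + 2 * s * z + 2)) z := by
      have := ((hdz (z, s, E) hp).pow 3).const_mul (2 : ℂ)
      refine this.congr_deriv (Eq.symm ?_)
      push_cast
      rw [mul_div_assoc', mul_div_assoc', eq_div_iff (by simp [hRne] : (2 : ℂ) * R ≠ 0)]
      ring
    have hg0 : 2 * R ^ 3 ≠ 0 := by
      simp [hRne]
    have hder := hf.div hg hg0
    rw [show pz (pz (fun x => 1 / r x)) (z, s, E)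
        = deriv (fun w => pz (fun x => 1 / r x) (w, s, E)) z from rfl,
      hev.deriv_eq]
    exact hder.deriv
  -- derivatives of Q
  have hQz : ∀ q : ℂ × ℂ × ℂ, pz Q q = 4 * q.1 ^ 3 + 2 * q.2.1 * q.1 + 2 := by
    intro q
    have hfn : (fun w => Q (w, q.2.1, q.2.2))
        = fun w => w ^ 4 + q.2.1 * w ^ 2 + 2 * w + q.2.2 := funext fun w => hQ _
    simp only [pz, hfn]
    exact (wkb_poly1 q.2.1 q.2.2 q.1).deriv
  have hQzz : pz (pz Q) (z, s, E) = 12 * z ^ 2 + 2 * s := by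
    have hfn : (fun w => pz Q (w, s, E)) = fun w => 4 * w ^ 3 + 2 * s * w + 2 :=
      funext fun w => hQz _
    rw [show pz (pz Q) (z, s, E) = deriv (fun w => pz Q (w, s, E)) z from rfl, hfn]
    exact (wkb_poly2 s z).deriv
  -- clean forms of the second derivatives
  have hA' : ps (pE r) (z, s, E) = -z ^ 2 / (4 * R ^ 3) := by
    rw [hA]
    field_simp
    ring
  have hB' : pE (pE r) (z, s, E) = -1 / (4 * R ^ 3) := by
    rw [hB]
    field_simp
    ring
  have hC' : pz (pz (fun x => 1 / r x)) (z, s, E)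
      = (-(12 * z ^ 2 + 2 * s) * (2 * R ^ 2) + 3 * (4 * z ^ 3 + 2 * s * z + 2) ^ 2)
        / (4 * R ^ 5) := by
    rw [hC, div_eq_div_iff (by simp [hRne]) (by simp [hRne])]
    ring
  -- final algebra
  have hQval : Q (z, s, E) = R ^ 2 := (hr2 _ hp).symm
  have hQz' : pz Q (z, s, E) = 4 * z ^ 3 + 2 * s * z + 2 := hQz _
  dsimp only
  rw [hQval, hQz', hQzz, hA', hB', hC']
  have h3 : (4 : ℂ) * R ^ 3 ≠ 0 := by simp [hRne]
  have e1 : -(-z ^ 2 / (4 * R ^ 3)) = z ^ 2 / (4 * R ^ 3) := by rw [neg_div, neg_neg]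
  have e2 : (s / 6) * (-1 / (4 * R ^ 3)) = (s * (-1)) / (6 * (4 * R ^ 3)) :=
    div_mul_div_comm s 6 (-1) (4 * R ^ 3)
  have e3 : ((5 : ℂ) / 24) * ((-(12 * z ^ 2 + 2 * s) * (2 * R ^ 2)
        + 3 * (4 * z ^ 3 + 2 * s * z + 2) ^ 2) / (4 * R ^ 5))
      = (5 * ((-(12 * z ^ 2 + 2 * s) * (2 * R ^ 2)
        + 3 * (4 * z ^ 3 + 2 * s * z + 2) ^ 2))) / (24 * (4 * R ^ 5)) :=
    div_mul_div_comm _ _ _ _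
  rw [e1, e2, e3, div_sub_div _ _ h3 (by simp [hRne]), div_sub_div _ _ (by simp [hRne]) (by simp [hRne]),
    div_eq_div_iff (by simp [hRne]) (by simp [hRne])]
  ring
end

section
/- Let t, Λ ∈ ℂ, n ∈ ℕ, and let p be a nonzero polynomial over ℂ such that F(x) := p(x)·exp(θ(x;t)) satisfies F''(x) = (x⁴ + t·x² + 2(n+1)·x + Λ)·F(x) for all x ∈ ℂ. Then the function 1/F² admits a global primitive off the zeros of p: there exists H : ℂ → ℂ such that at every x ∈ ℂ with p(x) ≠ 0, H is differentiable at x with H'(x) = 1/F(x)². (Equivalently, the differential dζ/F(ζ)², whose poles are double poles at the zeros of p, has vanishing residue at every pole, so the second solution G(x) = F(x)·∫ˣ dζ/F(ζ)² of the ODE is single-valued.) -/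
open Complex Polynomial Metric

/-- Every entire function on `ℂ` has a global primitive. -/
lemma entire_exists_primitive (f : ℂ → ℂ) (hf : Differentiable ℂ f) :
    ∃ S : ℂ → ℂ, ∀ x : ℂ, HasDerivAt S (f x) x := by
  set a : ℕ → ℂ := fun n => ((Nat.factorial n : ℂ))⁻¹ * iteratedDeriv n f 0 with ha
  have hsum : ∀ z : ℂ, HasSum (fun n => a n * z ^ n) (f z) := by
    intro z
    have h := hasSum_taylorSeries_of_entire hf 0 z
    simp only [sub_zero, smul_eq_mul] at h
    convert h using 2 with k
    · rfl
    ring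
  refine ⟨fun z => ∑' n, a n / ((n : ℂ) + 1) * z ^ (n + 1), ?_⟩
  intro x
  set R : ℝ := ‖x‖ + 1 with hR
  have hR0 : 0 < R := by positivity
  obtain ⟨C, hC⟩ : ∃ C : ℝ, ∀ n, ‖a n‖ * (2 * R) ^ n ≤ C := by
    have h0 := ((hsum ((2 * R : ℝ) : ℂ)).summable.tendsto_atTop_zero).norm.bddAbove_range
    obtain ⟨C, hC⟩ := h0
    refine ⟨C, fun n => ?_⟩
    have := hC (Set.mem_range_self n)
    simpa [norm_mul, norm_pow, abs_of_pos hR0] using this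
  have key := hasDerivAt_tsum_of_isPreconnected
    (u := fun n => C * (1/2 : ℝ) ^ n)
    (g := fun n z => a n / ((n : ℂ) + 1) * z ^ (n + 1))
    (g' := fun n z => a n * z ^ n)
    (Summable.mul_left C (summable_geometric_of_lt_one (by norm_num) (by norm_num)))
    isOpen_ball (convex_ball (0:ℂ) R).isPreconnected
    (fun n y _ => by
      have h := (hasDerivAt_pow (n + 1) y).const_mul (a n / ((n : ℂ) + 1))
      convert h using 1
      · rfl
      have : ((n : ℂ) + 1) ≠ 0 := Nat.cast_add_one_ne_zero n
      rw [Nat.add_sub_cancel, Nat.cast_add_one, ← mul_assoc, div_mul_cancel₀ _ this])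
    (fun n y hy => by
      have hyR : ‖y‖ ≤ R := le_of_lt (mem_ball_zero_iff.mp hy)
      calc ‖a n * y ^ n‖ = ‖a n‖ * ‖y‖ ^ n := by simp [norm_mul, norm_pow]
        _ ≤ ‖a n‖ * R ^ n := by gcongr
        _ = (‖a n‖ * (2 * R) ^ n) * (1/2 : ℝ) ^ n := by
            rw [mul_pow]; field_simp; rw [mul_assoc, ← mul_pow]; norm_num
        _ ≤ C * (1/2 : ℝ) ^ n :=
            mul_le_mul_of_nonneg_right (hC n) (by positivity))
    (mem_ball_self hR0)
    (Summable.congr summable_zero fun n => by simp)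
    (mem_ball_zero_iff.mpr (by simp only [hR]; exact lt_add_one _))
  rw [(hsum x).tsum_eq] at key
  exact key

lemma theta_hasDerivAt (t x : ℂ) :
    HasDerivAt (fun w : ℂ => w ^ 3 / 3 + t * w / 2) (x ^ 2 + t / 2) x := by
  have h := ((hasDerivAt_pow 3 x).div_const 3).add (((hasDerivAt_id x).const_mul t).div_const 2)
  convert h using 1
  · rfl
  · rfl
  · rfl
  push_cast
  ring

lemma poly_exp_hasDerivAt (t : ℂ) (q : Polynomial ℂ) (x : ℂ) :
    HasDerivAt (fun w => q.eval w * Complex.exp (w ^ 3 / 3 + t * w / 2))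
      ((q.derivative + (Polynomial.X ^ 2 + Polynomial.C (t / 2)) * q).eval x
        * Complex.exp (x ^ 3 / 3 + t * x / 2)) x := by
  have h := (q.hasDerivAt x).mul ((theta_hasDerivAt t x).cexp)
  convert h using 1
  · rfl
  · rfl
  · rfl
  simp only [eval_add, eval_mul, eval_pow, eval_X, eval_C]
  ring

set_option maxHeartbeats 2000000 in
/-- for a quasi-polynomial solution F = p·e^θ of the quartic
anharmonic oscillator ODE, 1/F² admits a global primitive off the zeros of p
(the residues of dζ/F² all vanish). -/
theorem reciprocal_square_has_global_primitive
    (t Λ : ℂ) (n : ℕ) (p : Polynomial ℂ) (hp : p ≠ 0)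
    (hode : ∀ x : ℂ,
      deriv (deriv (fun w => p.eval w * Complex.exp (w ^ 3 / 3 + t * w / 2))) x
        = (x ^ 4 + t * x ^ 2 + 2 * ((n : ℂ) + 1) * x + Λ)
          * (p.eval x * Complex.exp (x ^ 3 / 3 + t * x / 2))) :
    ∃ H : ℂ → ℂ, ∀ x : ℂ, p.eval x ≠ 0 →
      HasDerivAt H (1 / (p.eval x * Complex.exp (x ^ 3 / 3 + t * x / 2)) ^ 2) x := by
  classical
  -- Step 1: the polynomial form of the ODE
  have key : p.derivative.derivative + (2 * X ^ 2 + C t) * p.derivative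
      = (2 * C (n : ℂ) * X + C Λ - C (t ^ 2 / 4)) * p := by
    set Tp : Polynomial ℂ := X ^ 2 + C (t / 2) with hTp
    set q1 : Polynomial ℂ := p.derivative + Tp * p with hq1
    have hd1 : deriv (fun w => p.eval w * Complex.exp (w ^ 3 / 3 + t * w / 2))
        = fun y => q1.eval y * Complex.exp (y ^ 3 / 3 + t * y / 2) :=
      funext fun y => (poly_exp_hasDerivAt t p y).deriv
    have hode2 : ∀ x : ℂ, (q1.derivative + Tp * q1).eval x
        = (x ^ 4 + t * x ^ 2 + 2 * ((n : ℂ) + 1) * x + Λ) * p.eval x := by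
      intro x
      have h := hode x
      rw [hd1, (poly_exp_hasDerivAt t q1 x).deriv] at h
      have hne : Complex.exp (x ^ 3 / 3 + t * x / 2) ≠ 0 := Complex.exp_ne_zero _
      refine mul_right_cancel₀ hne ?_
      linear_combination h
    have hkey_pt : ∀ x : ℂ, (p.derivative.derivative).eval x
        + (2 * x ^ 2 + t) * (p.derivative).eval x
        = (2 * (n : ℂ) * x + Λ - t ^ 2 / 4) * p.eval x := by
      intro x
      have h := hode2 x
      simp only [hq1, hTp, derivative_add, derivative_mul, derivative_X_pow, derivative_C,
        derivative_X, eval_add, eval_sub, eval_mul, eval_pow, eval_X, eval_C, eval_ofNat,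
        eval_natCast, eval_zero, Nat.cast_ofNat, pow_one] at h
      linear_combination h
    apply Polynomial.funext
    intro x
    have h := hkey_pt x
    simp only [eval_add, eval_sub, eval_mul, eval_pow, eval_X, eval_C, eval_ofNat]
    linear_combination h
  set P1 := p.derivative with hP1
  set P2 := p.derivative.derivative with hP2
  -- Step 2: p and p' have no common root
  have hnocommon : ∀ a : ℂ, p.IsRoot a → ¬ P1.IsRoot a := by
    intro a hpa hP1a
    have hP1ne : P1 ≠ 0 := by
      intro h0
      rw [hP1] at h0
      have hpc := Polynomial.eq_C_of_derivative_eq_zero h0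
      rw [Polynomial.IsRoot] at hpa
      rw [hpc, eval_C] at hpa
      exact hp (by rw [hpc, hpa, map_zero])
    have hP2ne : P2 ≠ 0 := by
      intro h0
      have h0' : derivative P1 = 0 := by rw [hP1, ← hP2, h0]
      have hpc := Polynomial.eq_C_of_derivative_eq_zero h0'
      rw [Polynomial.IsRoot] at hP1a
      rw [hpc, eval_C] at hP1a
      exact hP1ne (by rw [hpc, hP1a, map_zero])
    set k := rootMultiplicity a p with hk
    have hk1 : rootMultiplicity a P1 = k - 1 :=
      Polynomial.derivative_rootMultiplicity_of_root hpa
    have hk2 : rootMultiplicity a P2 = k - 1 - 1 := by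
      rw [hP2, ← hP1, Polynomial.derivative_rootMultiplicity_of_root hP1a, hk1]
    have hkpos : 0 < rootMultiplicity a P1 := (rootMultiplicity_pos hP1ne).mpr hP1a
    have hkge2 : 2 ≤ k := by omega
    have dvd1 : (X - C a) ^ (k - 1) ∣ p :=
      dvd_trans (pow_dvd_pow _ (Nat.sub_le k 1)) (p.pow_rootMultiplicity_dvd a)
    have dvd2 : (X - C a) ^ (k - 1) ∣ P1 := by
      rw [← hk1]; exact P1.pow_rootMultiplicity_dvd a
    have dvd3 : (X - C a) ^ (k - 1) ∣ P2 := by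
      have hEq : P2 = (2 * C (n : ℂ) * X + C Λ - C (t ^ 2 / 4)) * p
          - (2 * X ^ 2 + C t) * P1 := by linear_combination key
      rw [hEq]
      exact dvd_sub (dvd1.mul_left _) (dvd2.mul_left _)
    have hle : k - 1 ≤ rootMultiplicity a P2 :=
      (Polynomial.le_rootMultiplicity_iff hP2ne).mpr dvd3
    omega
  -- Step 3: p and p' are coprime
  have hco : IsCoprime p P1 := by
    by_contra hnc
    have hgu : ¬ IsUnit (EuclideanDomain.gcd p P1) := fun h =>
      hnc (EuclideanDomain.gcd_isUnit_iff.mp h)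
    have hgne : EuclideanDomain.gcd p P1 ≠ 0 := fun h =>
      hp (EuclideanDomain.gcd_eq_zero_iff.mp h).1
    have hdeg : (EuclideanDomain.gcd p P1).degree ≠ 0 := fun h =>
      hgu (Polynomial.isUnit_iff_degree_eq_zero.mpr h)
    obtain ⟨a, ha⟩ := IsAlgClosed.exists_root _ hdeg
    exact hnocommon a (ha.dvd (EuclideanDomain.gcd_dvd_left p P1))
      (ha.dvd (EuclideanDomain.gcd_dvd_right p P1))
  -- Step 4: Bezout and the divisibility of the residue polynomial
  obtain ⟨u, v, huv⟩ := id hco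
  have hder : (u * p + v * P1).derivative = 0 := by rw [huv, derivative_one]
  have hder' : u.derivative * p + u * P1 + v.derivative * P1 + v * P2 = 0 := by
    have h := hder
    simp only [derivative_add, derivative_mul, ← hP1, ← hP2] at h
    linear_combination h
  have hwdvd : p ∣ (u + v.derivative - (2 * X ^ 2 + C t) * v) * P1 := by
    refine ⟨-(u.derivative) - v * (2 * C (n : ℂ) * X + C Λ - C (t ^ 2 / 4)), ?_⟩
    linear_combination hder' - v * key
  obtain ⟨m, hm⟩ := IsCoprime.dvd_of_dvd_mul_right hco hwdvd
  -- Step 5: the global decomposition identity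
  have final : v * P1 - v.derivative * p + (2 * X ^ 2 + C t) * v * p + m * p ^ 2 = 1 := by
    linear_combination huv - p * hm
  -- Step 6: analysis
  obtain ⟨S, hS⟩ := entire_exists_primitive
    (fun x => m.eval x * Complex.exp (-(2 * (x ^ 3 / 3 + t * x / 2))))
    (by
      apply Differentiable.mul
      · exact fun x => (m.hasDerivAt x).differentiableAt
      · apply Complex.differentiable_exp.comp
        apply Differentiable.neg
        apply Differentiable.const_mul
        exact fun x => ((theta_hasDerivAt t x).differentiableAt))
  refine ⟨fun x => -(v.eval x) / p.eval x * Complex.exp (-(2 * (x ^ 3 / 3 + t * x / 2))) + S x,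
    fun x hx => ?_⟩
  have hdiv := ((v.hasDerivAt x).neg).div (p.hasDerivAt x) hx
  have hexp : HasDerivAt (fun w : ℂ => Complex.exp (-(2 * (w ^ 3 / 3 + t * w / 2))))
      (Complex.exp (-(2 * (x ^ 3 / 3 + t * x / 2))) * (-(2 * (x ^ 2 + t / 2)))) x :=
    (((theta_hasDerivAt t x).const_mul 2).neg).cexp
  have htot := (hdiv.mul hexp).add (hS x)
  convert htot using 1
  · rfl
  · rfl
  · rfl
  have evf : v.eval x * P1.eval x - v.derivative.eval x * p.eval x
      + (2 * x ^ 2 + t) * (v.eval x) * (p.eval x) + m.eval x * (p.eval x) ^ 2 = 1 := by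
    have h := congrArg (eval x) final
    simpa only [eval_add, eval_sub, eval_mul, eval_pow, eval_X, eval_C, eval_one,
      eval_ofNat] using h
  have hE : Complex.exp (-(2 * (x ^ 3 / 3 + t * x / 2)))
      = 1 / Complex.exp (x ^ 3 / 3 + t * x / 2) ^ 2 := by
    rw [show -(2 * (x ^ 3 / 3 + t * x / 2))
        = -(x ^ 3 / 3 + t * x / 2) + -(x ^ 3 / 3 + t * x / 2) by ring,
      Complex.exp_add, Complex.exp_neg]
    rw [sq]
    field_simp
  rw [hP1] at evf
  rw [hE]
  set E := Complex.exp (x ^ 3 / 3 + t * x / 2) with hEdef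
  have hEne : E ≠ 0 := Complex.exp_ne_zero _
  rw [← sub_eq_zero]
  simp only [Pi.neg_apply, Pi.div_apply]
  field_simp [hx, hEne]
  linear_combination (-1 : ℂ) * evf
end
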